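/- Let $0 \le \lambda_1 \le \lambda_2 \le \cdots \le \lambda_{2p} \le 1$ be the sorted merged list of endpoints $\{\lambda_j^0, \lambda_j^1\}_{j=1}^p$ of $p$ closed intervals $I_j = [\lambda_j^0, \lambda_j^1] \subseteq [0,1]$. For an index $\ell \in \{1, \ldots, 2p-1\}$, the subsegment $[\lambda_\ell, \lambda_{\ell+1}]$ is contained in $\bigcup_{j=1}^p I_j$ if and only if there exists $j \in \{1,\ldots,p\}$ such that $\lambda_j^0 \le \lambda_\ell$ and $\lambda_{\ell+1} \le \lambda_j^1$. -/
import Mathlib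


theorem stmt_9 (p : ℕ) (l0 l1 : Fin p → ℝ)
    (hsub : ∀ j, Set.Icc (l0 j) (l1 j) ⊆ Set.Icc (0 : ℝ) 1)
    (hle : ∀ j, l0 j ≤ l1 j)
    (Λ : Fin (2 * p) → ℝ) (hmono : Monotone Λ)
    (σ : Fin (2 * p) ≃ Fin p × Bool)
    (hperm : ∀ i, Λ i = if (σ i).2 then l1 (σ i).1 else l0 (σ i).1)
    (i : ℕ) (hi : i + 1 < 2 * p) :
    Set.Icc (Λ ⟨i, by omega⟩) (Λ ⟨i + 1, hi⟩) ⊆ ⋃ j, Set.Icc (l0 j) (l1 j) ↔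
      ∃ j, l0 j ≤ Λ ⟨i, by omega⟩ ∧ Λ ⟨i + 1, hi⟩ ≤ l1 j := by
  set a := Λ ⟨i, by omega⟩ with ha
  set b := Λ ⟨i + 1, hi⟩ with hb
  have hab : a ≤ b := hmono (by simp [Fin.le_def])
  constructor
  · intro hcov
    have hm : (a + b) / 2 ∈ Set.Icc a b := ⟨by linarith, by linarith⟩
    obtain ⟨S, ⟨j, rfl⟩, hjm⟩ := hcov hm
    simp only [Set.mem_Icc] at hjm
    rcases eq_or_lt_of_le hab with heq | hlt
    · exact ⟨j, by linarith [hjm.1, hjm.2], by linarith [hjm.1, hjm.2]⟩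
    · refine ⟨j, ?_, ?_⟩
      · -- l0 j = Λ k with Λ k < b, so k ≤ i, so l0 j ≤ a
        have h0 : l0 j = Λ (σ.symm (j, false)) := by
          rw [hperm]; simp
        have hlt' : Λ (σ.symm (j, false)) < b := by
          rw [← h0]; calc l0 j ≤ (a + b) / 2 := hjm.1
            _ < b := by linarith
        rw [h0]
        have hk : σ.symm (j, false) ≤ (⟨i, by omega⟩ : Fin (2 * p)) := by
          by_contra hc
          push_neg at hc
          have : (⟨i + 1, hi⟩ : Fin (2 * p)) ≤ σ.symm (j, false) := by
            simp only [Fin.le_def, Fin.lt_def] at hc ⊢; omega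
          exact absurd (hmono this) (by rw [← hb]; exact not_le.mpr hlt')
        exact hmono hk
      · have h1 : l1 j = Λ (σ.symm (j, true)) := by
          rw [hperm]; simp
        have hgt' : a < Λ (σ.symm (j, true)) := by
          rw [← h1]; calc a < (a + b) / 2 := by linarith
            _ ≤ l1 j := hjm.2
        rw [h1]
        have hk : (⟨i + 1, hi⟩ : Fin (2 * p)) ≤ σ.symm (j, true) := by
          by_contra hc
          push_neg at hc
          have : σ.symm (j, true) ≤ (⟨i, by omega⟩ : Fin (2 * p)) := by
            simp only [Fin.le_def, Fin.lt_def] at hc ⊢; omega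
          exact absurd (hmono this) (by rw [← ha]; exact not_le.mpr hgt')
        exact hmono hk
  · rintro ⟨j, hj0, hj1⟩ x hx
    exact Set.mem_iUnion.mpr ⟨j, ⟨le_trans hj0 hx.1, le_trans hx.2 hj1⟩⟩
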